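/- arXiv:2604.24656 — 2 statements merged into one kernel-verified Lean document; each statement's English description precedes it below -/
import Mathlib

section
/- Let H₁,…,H_m be i.i.d. nonnegative with E[H]=1, σ_H² := Var(H) < ∞, satisfying the small-ball condition P(H ≤ x) ≤ c·x^κ for x ∈ (0,1], and let Z = Σ H_k. Then for all sufficiently large m (in particular whenever c^m (1/2)^{mκ−1}/(mκ−1) ≤ 2/m and mκ > 1), E[1/Z] ≤ (4 + 64σ_H²)/m. -/
open MeasureTheory ProbabilityTheory Set

theorem stmt11 {Ω : Type*} [MeasurableSpace Ω] (μ : Measure Ω) [IsProbabilityMeasure μ]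
    (m : ℕ) (hm : 0 < m) (H : Fin m → Ω → ℝ)
    (hmeas : ∀ i, Measurable (H i))
    (hindep : iIndepFun H μ)
    (hident : ∀ i j, μ.map (H i) = μ.map (H j))
    (hnn : ∀ i ω, 0 ≤ H i ω)
    (hL2 : ∀ i, MemLp (H i) 2 μ)
    (hmean : ∀ i, ∫ ω, H i ω ∂μ = 1)
    (c κ : ℝ) (hc : 0 < c) (hκ : 0 < κ)
    (hsb : ∀ i, ∀ x : ℝ, 0 < x → x ≤ 1 → (μ {ω | H i ω ≤ x}).toReal ≤ c * x ^ κ)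
    (hmκ : 1 < (m : ℝ) * κ)
    (hcond : c ^ m * (1 / 2 : ℝ) ^ ((m : ℝ) * κ - 1) / ((m : ℝ) * κ - 1) ≤ 2 / m) :
    ∫⁻ ω, ENNReal.ofReal (∑ i, H i ω)⁻¹ ∂μ ≤
      ENNReal.ofReal ((4 + 64 * variance (H ⟨0, hm⟩) μ) / m) := by
  classical
  have hm0 : (0:ℝ) < m := by exact_mod_cast hm
  set σ2 : ℝ := variance (H ⟨0, hm⟩) μ with hσ2
  have hσ2nn : 0 ≤ σ2 := by rw [hσ2]; exact variance_nonneg _ μ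
  set Z : Ω → ℝ := fun ω => ∑ i, H i ω with hZdef
  have hZmeas : Measurable Z := Finset.measurable_sum _ (fun i _ => hmeas i)
  have hZnn : ∀ ω, 0 ≤ Z ω := fun ω => Finset.sum_nonneg fun i _ => hnn i ω
  have hZ2 : MemLp Z 2 μ := memLp_finset_sum Finset.univ (fun i _ => hL2 i)
  -- identical variances
  have hvar_eq : ∀ i, variance (H i) μ = σ2 := by
    intro i
    have key : ∀ j : Fin m, ∫ ω, (H j ω) ^ 2 ∂μ = ∫ x, x ^ 2 ∂(μ.map (H ⟨0, hm⟩)) := by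
      intro j
      rw [← hident j ⟨0, hm⟩]
      exact (integral_map (hmeas j).aemeasurable
        ((by fun_prop : Measurable fun x : ℝ => x ^ 2)).aestronglyMeasurable).symm
    rw [hσ2, variance_eq_sub (hL2 i), variance_eq_sub (hL2 ⟨0, hm⟩)]
    simp only [Pi.pow_apply]
    rw [hmean i, hmean ⟨0, hm⟩, key i, key ⟨0, hm⟩]
  -- mean of Z
  have hZmean : ∫ ω, Z ω ∂μ = m := by
    rw [hZdef]
    rw [integral_finset_sum Finset.univ (fun i _ => (hL2 i).integrable one_le_two)]
    simp [hmean]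
  -- variance of Z
  have hZvar : variance Z μ = m * σ2 := by
    have hfun : Z = ∑ i, H i := by funext ω; simp [hZdef]
    rw [hfun, IndepFun.variance_sum (fun i _ => hL2 i)
      (fun i _ j _ hij => hindep.indepFun hij)]
    simp [hvar_eq]
  -- Chebyshev
  have hcheb : μ {ω | Z ω < m / 2} ≤ ENNReal.ofReal (4 * σ2 / m) := by
    have h1 : {ω | Z ω < m / 2} ⊆ {ω | (m:ℝ)/2 ≤ |Z ω - μ[Z]|} := by
      intro ω hω
      simp only [Set.mem_setOf_eq] at hω ⊢
      rw [hZmean]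
      exact le_abs.2 (Or.inr (by linarith))
    calc μ {ω | Z ω < m / 2} ≤ μ {ω | (m:ℝ)/2 ≤ |Z ω - μ[Z]|} := measure_mono h1
      _ ≤ ENNReal.ofReal (variance Z μ / ((m:ℝ)/2) ^ 2) :=
          meas_ge_le_variance_div_sq hZ2 (by positivity)
      _ = ENNReal.ofReal (4 * σ2 / m) := by
          rw [hZvar]; congr 1; field_simp; ring
  -- small ball for Z
  have hsbZ : ∀ x : ℝ, 0 < x → x ≤ 1 → μ {ω | Z ω ≤ x} ≤ ENNReal.ofReal ((c * x ^ κ) ^ m) := by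
    intro x hx hx1
    have hsub : {ω | Z ω ≤ x} ⊆ ⋂ i, H i ⁻¹' Iic x := by
      intro ω hω
      simp only [Set.mem_iInter, Set.mem_preimage, Set.mem_Iic]
      intro i
      calc H i ω ≤ Z ω := Finset.single_le_sum (fun j _ => hnn j ω) (Finset.mem_univ i)
        _ ≤ x := hω
    have hprod : μ (⋂ i, H i ⁻¹' Iic x) = ∏ i, μ (H i ⁻¹' Iic x) :=
      hindep.meas_iInter (fun i => ⟨Iic x, measurableSet_Iic, rfl⟩)
    have hfac : ∀ i : Fin m, μ (H i ⁻¹' Iic x) ≤ ENNReal.ofReal (c * x ^ κ) := by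
      intro i
      have h := hsb i x hx hx1
      have hne : μ (H i ⁻¹' Iic x) ≠ ⊤ := measure_ne_top μ _
      rw [← ENNReal.ofReal_toReal hne]
      exact ENNReal.ofReal_le_ofReal h
    calc μ {ω | Z ω ≤ x} ≤ μ (⋂ i, H i ⁻¹' Iic x) := measure_mono hsub
      _ = ∏ i, μ (H i ⁻¹' Iic x) := hprod
      _ ≤ ∏ _i : Fin m, ENNReal.ofReal (c * x ^ κ) :=
          Finset.prod_le_prod' (fun i _ => hfac i)
      _ = ENNReal.ofReal ((c * x ^ κ) ^ m) := by
          rw [Finset.prod_const, Finset.card_univ, Fintype.card_fin,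
            ← ENNReal.ofReal_pow (by positivity)]
  -- the split
  set A : Set Ω := {ω | (m:ℝ)/2 ≤ Z ω} with hA
  have hAmeas : MeasurableSet A := measurableSet_le measurable_const hZmeas
  have hA_bound : ∫⁻ ω in A, ENNReal.ofReal (Z ω)⁻¹ ∂μ ≤ ENNReal.ofReal (2 / m) := by
    calc ∫⁻ ω in A, ENNReal.ofReal (Z ω)⁻¹ ∂μ
        ≤ ∫⁻ _ω in A, ENNReal.ofReal (2 / m) ∂μ := by
          apply setLIntegral_mono measurable_const
          intro ω hω
          apply ENNReal.ofReal_le_ofReal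
          have hω' : (m:ℝ)/2 ≤ Z ω := hω
          have h2 : (0:ℝ) < (m:ℝ)/2 := by positivity
          calc (Z ω)⁻¹ ≤ ((m:ℝ)/2)⁻¹ := by
                apply inv_anti₀ h2 hω'
            _ = 2 / m := by field_simp
      _ = ENNReal.ofReal (2 / m) * μ A := setLIntegral_const _ _
      _ ≤ ENNReal.ofReal (2 / m) * 1 := by gcongr; exact prob_le_one
      _ = ENNReal.ofReal (2 / m) := mul_one _
  -- piece B via layercake
  set f : Ω → ℝ := Aᶜ.indicator (fun ω => (Z ω)⁻¹) with hf
  have hfmeas : Measurable f := (hZmeas.inv).indicator hAmeas.compl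
  have hfnn : ∀ ω, 0 ≤ f ω :=
    fun ω => Set.indicator_nonneg (fun ω _ => inv_nonneg.2 (hZnn ω)) ω
  have hBpre : ∫⁻ ω in Aᶜ, ENNReal.ofReal (Z ω)⁻¹ ∂μ
      = ∫⁻ t in Ioi (0:ℝ), μ {a | t < f a} := by
    rw [← lintegral_indicator hAmeas.compl,
      ← lintegral_eq_lintegral_meas_lt μ (ae_of_all μ hfnn) hfmeas.aemeasurable]
    congr 1
    funext ω
    by_cases h : ω ∈ Aᶜ <;> simp [hf, Set.indicator_apply, h]
  have hev1 : ∀ t : ℝ, 0 < t → {a | t < f a} ⊆ {ω | Z ω < m / 2} := by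
    intro t ht a ha
    simp only [Set.mem_setOf_eq] at ha ⊢
    by_cases h : a ∈ Aᶜ
    · have : ¬ ((m:ℝ)/2 ≤ Z a) := h
      linarith [not_le.1 this]
    · rw [hf, Set.indicator_of_notMem h] at ha
      linarith
  have hev2 : ∀ t : ℝ, 2 < t →
      μ {a | t < f a} ≤ ENNReal.ofReal (c ^ m * t ^ (-((m:ℝ) * κ))) := by
    intro t ht
    have ht0 : 0 < t := by linarith
    have hsub : {a | t < f a} ⊆ {ω | Z ω ≤ t⁻¹} := by
      intro a ha
      simp only [Set.mem_setOf_eq] at ha ⊢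
      by_cases h : a ∈ Aᶜ
      · rw [hf, Set.indicator_of_mem h] at ha
        have hZpos : 0 < Z a := by
          rcases lt_or_eq_of_le (hZnn a) with h' | h'
          · exact h'
          · rw [← h'] at ha; simp at ha; linarith
        have : t * Z a < 1 := by
          calc t * Z a < (Z a)⁻¹ * Z a := by
                exact mul_lt_mul_of_pos_right ha hZpos
            _ = 1 := inv_mul_cancel₀ (ne_of_gt hZpos)
        rw [← one_div, le_div_iff₀ ht0]
        nlinarith
      · rw [hf, Set.indicator_of_notMem h] at ha
        linarith
    have hx1 : t⁻¹ ≤ 1 := by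
      rw [inv_le_one_iff₀]; right; linarith
    calc μ {a | t < f a} ≤ μ {ω | Z ω ≤ t⁻¹} := measure_mono hsub
      _ ≤ ENNReal.ofReal ((c * (t⁻¹) ^ κ) ^ m) := hsbZ t⁻¹ (by positivity) hx1
      _ = ENNReal.ofReal (c ^ m * t ^ (-((m:ℝ) * κ))) := by
          congr 1
          rw [mul_pow]
          congr 1
          rw [Real.inv_rpow ht0.le, ← Real.rpow_neg ht0.le,
            ← Real.rpow_natCast (t ^ (-κ)) m, ← Real.rpow_mul ht0.le]
          congr 1
          ring
  have hsplitIoi : ∫⁻ t in Ioi (0:ℝ), μ {a | t < f a}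
      = (∫⁻ t in Ioc (0:ℝ) 2, μ {a | t < f a}) + ∫⁻ t in Ioi (2:ℝ), μ {a | t < f a} := by
    rw [← lintegral_union measurableSet_Ioi (Set.Ioc_disjoint_Ioi le_rfl),
      Set.Ioc_union_Ioi_eq_Ioi (by norm_num : (0:ℝ) ≤ 2)]
  have hB1 : ∫⁻ t in Ioc (0:ℝ) 2, μ {a | t < f a} ≤ ENNReal.ofReal (8 * σ2 / m) := by
    calc ∫⁻ t in Ioc (0:ℝ) 2, μ {a | t < f a}
        ≤ ∫⁻ _t in Ioc (0:ℝ) 2, ENNReal.ofReal (4 * σ2 / m) := by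
          apply setLIntegral_mono measurable_const
          intro t ht
          exact le_trans (measure_mono (hev1 t ht.1)) hcheb
      _ = ENNReal.ofReal (4 * σ2 / m) * volume (Ioc (0:ℝ) 2) := setLIntegral_const _ _
      _ = ENNReal.ofReal (8 * σ2 / m) := by
          rw [Real.volume_Ioc, ← ENNReal.ofReal_mul (by positivity)]
          norm_num
          congr 1
          ring
  have hexp : -((m:ℝ) * κ) < -1 := by linarith
  have hB2 : ∫⁻ t in Ioi (2:ℝ), μ {a | t < f a} ≤ ENNReal.ofReal (2 / m) := by
    have hint : IntegrableOn (fun t : ℝ => c ^ m * t ^ (-((m:ℝ) * κ))) (Ioi 2) :=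
      (integrableOn_Ioi_rpow_of_lt hexp (by norm_num)).const_mul _
    have hg : Measurable fun t : ℝ => ENNReal.ofReal (c ^ m * t ^ (-((m:ℝ) * κ))) := by
      fun_prop
    calc ∫⁻ t in Ioi (2:ℝ), μ {a | t < f a}
        ≤ ∫⁻ t in Ioi (2:ℝ), ENNReal.ofReal (c ^ m * t ^ (-((m:ℝ) * κ))) :=
          setLIntegral_mono hg (fun t ht => hev2 t ht)
      _ = ENNReal.ofReal (∫ t in Ioi (2:ℝ), c ^ m * t ^ (-((m:ℝ) * κ))) := by
          rw [← ofReal_integral_eq_lintegral_ofReal hint]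
          filter_upwards [self_mem_ae_restrict (measurableSet_Ioi : MeasurableSet (Ioi (2:ℝ)))]
            with t ht
          have ht0 : (0:ℝ) < t := by have := ht; simp only [Set.mem_Ioi] at this; linarith
          positivity
      _ ≤ ENNReal.ofReal (2 / m) := by
          apply ENNReal.ofReal_le_ofReal
          rw [integral_const_mul, integral_Ioi_rpow_of_lt hexp (by norm_num)]
          have h2 : (2:ℝ) ^ (-((m:ℝ) * κ) + 1) = (1/2:ℝ) ^ ((m:ℝ) * κ - 1) := by
            rw [one_div, Real.inv_rpow (by norm_num), ← Real.rpow_neg (by norm_num)]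
            congr 1
            ring
          rw [h2]
          have hne : (m:ℝ) * κ - 1 ≠ 0 := by linarith
          have : c ^ m * (-(1/2:ℝ) ^ ((m:ℝ) * κ - 1) / (-((m:ℝ) * κ) + 1))
              = c ^ m * (1/2:ℝ) ^ ((m:ℝ) * κ - 1) / ((m:ℝ) * κ - 1) := by
            rw [show -((m:ℝ) * κ) + 1 = -((m:ℝ) * κ - 1) by ring, neg_div_neg_eq,
              mul_div_assoc]
          rw [this]
          exact hcond
  -- combine everything
  have key : ∫⁻ ω, ENNReal.ofReal (Z ω)⁻¹ ∂μ
      ≤ ENNReal.ofReal (2 / m) + (ENNReal.ofReal (8 * σ2 / m) + ENNReal.ofReal (2 / m)) := by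
    have hB : ∫⁻ ω in Aᶜ, ENNReal.ofReal (Z ω)⁻¹ ∂μ
        ≤ ENNReal.ofReal (8 * σ2 / m) + ENNReal.ofReal (2 / m) := by
      rw [hBpre, hsplitIoi]
      exact add_le_add hB1 hB2
    rw [← lintegral_add_compl (fun ω => ENNReal.ofReal (Z ω)⁻¹) hAmeas]
    exact add_le_add hA_bound hB
  calc ∫⁻ ω, ENNReal.ofReal (∑ i, H i ω)⁻¹ ∂μ = ∫⁻ ω, ENNReal.ofReal (Z ω)⁻¹ ∂μ := rfl
    _ ≤ ENNReal.ofReal (2 / m) + (ENNReal.ofReal (8 * σ2 / m) + ENNReal.ofReal (2 / m)) := key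
    _ ≤ ENNReal.ofReal ((4 + 64 * σ2) / m) := by
        rw [← ENNReal.ofReal_add (by positivity) (by positivity),
          ← ENNReal.ofReal_add (by positivity) (by positivity)]
        apply ENNReal.ofReal_le_ofReal
        have h : 2 / (m:ℝ) + (8 * σ2 / m + 2 / m) = (4 + 8 * σ2) / m := by ring
        rw [h]
        gcongr
        linarith
end

section
/- Under the thinning model: let S ≥ 0 with E[S] ≤ s₀, and I ≥ c₀·W where W = Σ_{k=1}^m δ_k H_k as above. Then for τ > 0, σ² > 0, P(S/(I+σ²) > τ) ≤ 4E[H²]/(qm) + 2s₀/(τ c₀ q m). In particular this upper bound tends to 0 whenever q·m → ∞. -/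
open MeasureTheory ProbabilityTheory

theorem stmt14 {Ω : Type*} [MeasurableSpace Ω] (μ : Measure Ω) [IsProbabilityMeasure μ]
    (m : ℕ) (hm : 0 < m) (q : ℝ) (hq0 : 0 < q) (hq1 : q ≤ 1)
    (δ H : Fin m → Ω → ℝ)
    (hδmeas : ∀ k, Measurable (δ k)) (hHmeas : ∀ k, Measurable (H k))
    (hδ01 : ∀ k ω, δ k ω = 0 ∨ δ k ω = 1)
    (hδq : ∀ k, ∫ ω, δ k ω ∂μ = q)
    (hnn : ∀ k ω, 0 ≤ H k ω)
    (hHmean : ∀ k, ∫ ω, H k ω ∂μ = 1)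
    (hHL2 : ∀ k, MemLp (H k) 2 μ)
    (hpair_indep :
      iIndepFun (fun k ω => (δ k ω, H k ω)) μ)
    (hpair_ident : ∀ k l,
      μ.map (fun ω => (δ k ω, H k ω)) = μ.map (fun ω => (δ l ω, H l ω)))
    (hδH : ∀ k, IndepFun (δ k) (H k) μ)
    (S I : Ω → ℝ) (hSmeas : Measurable S) (hSnn : ∀ ω, 0 ≤ S ω)
    (hSint : Integrable S μ)
    (s₀ c₀ σ2 τ : ℝ) (hs₀ : ∫ ω, S ω ∂μ ≤ s₀)
    (hc₀ : 0 < c₀) (hσ : 0 < σ2) (hτ : 0 < τ)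
    (hInn : ∀ ω, 0 ≤ I ω)
    (hIW : ∀ ω, c₀ * (∑ k, δ k ω * H k ω) ≤ I ω) :
    (μ {ω | τ < S ω / (I ω + σ2)}).toReal ≤
      4 * (∫ ω, (H ⟨0, hm⟩ ω) ^ 2 ∂μ) / (q * m) + 2 * s₀ / (τ * c₀ * q * m) ∧
    Filter.Tendsto
      (fun x : ℝ => 4 * (∫ ω, (H ⟨0, hm⟩ ω) ^ 2 ∂μ) / x + 2 * s₀ / (τ * c₀ * x))
      Filter.atTop (nhds 0) := by
  set E0 : ℝ := ∫ ω, (H ⟨0, hm⟩ ω) ^ 2 ∂μ with hE0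
  have hE0nn : 0 ≤ E0 := integral_nonneg fun ω => sq_nonneg _
  have hmpos : (0:ℝ) < m := Nat.cast_pos.mpr hm
  constructor
  swap
  · have h1 : Filter.Tendsto (fun x : ℝ => 4 * E0 / x) Filter.atTop (nhds 0) :=
      Filter.Tendsto.div_atTop tendsto_const_nhds Filter.tendsto_id
    have h2 : Filter.Tendsto (fun x : ℝ => 2 * s₀ / (τ * c₀ * x)) Filter.atTop (nhds 0) :=
      Filter.Tendsto.div_atTop tendsto_const_nhds
        (Filter.Tendsto.const_mul_atTop (by positivity) Filter.tendsto_id)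
    simpa using h1.add h2
  -- main bound
  -- L² membership of each δ k * H k
  have hM : ∀ k, Measurable (fun ω => δ k ω * H k ω) := fun k => (hδmeas k).mul (hHmeas k)
  have hδle : ∀ k ω, |δ k ω| ≤ 1 := by
    intro k ω; rcases hδ01 k ω with h | h <;> simp [h]
  have hf : ∀ k, MemLp (fun ω => δ k ω * H k ω) 2 μ := by
    intro k
    refine (hHL2 k).of_le (hM k).aestronglyMeasurable (Filter.Eventually.of_forall fun ω => ?_)
    rw [Real.norm_eq_abs, Real.norm_eq_abs, abs_mul]
    calc |δ k ω| * |H k ω| ≤ 1 * |H k ω| :=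
          mul_le_mul_of_nonneg_right (hδle k ω) (abs_nonneg _)
      _ = |H k ω| := one_mul _
  have hint : ∀ k, Integrable (fun ω => δ k ω * H k ω) μ := fun k => (hf k).integrable one_le_two
  -- means
  have hmean : ∀ k, ∫ ω, δ k ω * H k ω ∂μ = q := by
    intro k
    have := (hδH k).integral_mul_eq_mul_integral (hδmeas k).aestronglyMeasurable (hHmeas k).aestronglyMeasurable
    calc ∫ ω, δ k ω * H k ω ∂μ = ∫ ω, (δ k * H k) ω ∂μ := rfl
      _ = (∫ ω, δ k ω ∂μ) * ∫ ω, H k ω ∂μ := this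
      _ = q := by rw [hδq, hHmean]; ring
  -- identical second moments
  have hH0sq : ∀ k, ∫ ω, (H k ω) ^ 2 ∂μ = E0 := by
    intro k
    have hg : Measurable (fun p : ℝ × ℝ => p.2 ^ 2) := (measurable_snd.pow_const 2)
    have hmk : ∀ j : Fin m, ∫ ω, (H j ω) ^ 2 ∂μ
        = ∫ p, p.2 ^ 2 ∂(μ.map (fun ω => (δ j ω, H j ω))) := by
      intro j
      rw [integral_map ((hδmeas j).prodMk (hHmeas j)).aemeasurable hg.aestronglyMeasurable]
    rw [hmk k, hpair_ident k ⟨0, hm⟩, ← hmk ⟨0, hm⟩]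
  -- variance of each term
  have hsq_int : ∀ k, Integrable (fun ω => (H k ω) ^ 2) μ := by
    intro k
    have := (hHL2 k).integrable_sq
    simpa [sq] using this
  have hvar : ∀ k, variance (fun ω => δ k ω * H k ω) μ ≤ q * E0 := by
    intro k
    rw [variance_eq_sub (hf k)]
    have h1 : ∫ ω, ((fun ω => δ k ω * H k ω) ^ 2) ω ∂μ = ∫ ω, δ k ω * (H k ω) ^ 2 ∂μ := by
      apply integral_congr_ae
      apply Filter.Eventually.of_forall
      intro ω
      simp only [Pi.pow_apply]
      rcases hδ01 k ω with h | h <;> simp [h] <;> ring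
    have hindsq : IndepFun (δ k) (fun ω => (H k ω) ^ 2) μ := by
      have := (hδH k).comp measurable_id (measurable_id.pow_const 2)
      exact this
    have h2 : ∫ ω, δ k ω * (H k ω) ^ 2 ∂μ = q * E0 := by
      have := hindsq.integral_mul_eq_mul_integral (hδmeas k).aestronglyMeasurable
        ((hHmeas k).pow_const 2).aestronglyMeasurable
      calc ∫ ω, δ k ω * (H k ω) ^ 2 ∂μ = ∫ ω, (δ k * fun ω => (H k ω) ^ 2) ω ∂μ := rfl
        _ = (∫ ω, δ k ω ∂μ) * ∫ ω, (H k ω) ^ 2 ∂μ := this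
        _ = q * E0 := by rw [hδq, hH0sq]
    have h3 : ∫ ω, (fun ω => δ k ω * H k ω) ω ∂μ = q := hmean k
    rw [h1, h2, h3]
    nlinarith [sq_nonneg q]
  -- W and its properties
  set X : Fin m → Ω → ℝ := fun k ω => δ k ω * H k ω with hX
  set W : Ω → ℝ := ∑ k, X k with hWdef
  have hWapp : ∀ ω, W ω = ∑ k, δ k ω * H k ω := by
    intro ω; rw [hWdef]; simp [hX]
  have hWL2 : MemLp W 2 μ := memLp_finset_sum' _ fun k _ => hf k
  have hEW : ∫ ω, W ω ∂μ = q * m := by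
    rw [hWdef]
    have : ∫ ω, (∑ k, X k) ω ∂μ = ∑ k : Fin m, ∫ ω, X k ω ∂μ := by
      simp only [Finset.sum_apply]
      exact integral_finset_sum _ fun k _ => hint k
    rw [this]
    simp only [hX]
    rw [Finset.sum_congr rfl fun k _ => hmean k]
    simp [mul_comm]
  -- pairwise independence
  have hpair : Set.Pairwise ↑(Finset.univ : Finset (Fin m)) fun i j => IndepFun (X i) (X j) μ := by
    intro i _ j _ hij
    have hcomp : iIndepFun
        (fun k => (fun p : ℝ × ℝ => p.1 * p.2) ∘ (fun ω => (δ k ω, H k ω))) μ :=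
      hpair_indep.comp _ (fun k => measurable_fst.mul measurable_snd)
    exact hcomp.indepFun hij
  have hvarW : variance W μ ≤ m * (q * E0) := by
    rw [hWdef, IndepFun.variance_sum (fun k _ => hf k) hpair]
    calc ∑ k : Fin m, variance (X k) μ ≤ ∑ _k : Fin m, q * E0 :=
          Finset.sum_le_sum fun k _ => hvar k
      _ = m * (q * E0) := by simp [mul_comm]
  -- Chebyshev
  have hqm2 : (0:ℝ) < q * m / 2 := by positivity
  have hcheb := meas_ge_le_variance_div_sq (μ := μ) hWL2 hqm2
  have hchebR : (μ {ω | q * m / 2 ≤ |W ω - q * m|}).toReal ≤ 4 * E0 / (q * m) := by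
    have hEWμ : μ[W] = q * m := hEW
    rw [hEWμ] at hcheb
    refine ENNReal.toReal_le_of_le_ofReal (by positivity) (hcheb.trans ?_)
    apply ENNReal.ofReal_le_ofReal
    rw [div_le_div_iff₀ (by positivity) (by positivity)]
    have hv0 : 0 ≤ variance W μ := variance_nonneg _ _
    nlinarith [hvarW, mul_pos hq0 hmpos]
  -- Markov
  have hb : (0:ℝ) < τ * (c₀ * q * m / 2) := by positivity
  have hmarkov := mul_meas_ge_le_integral_of_nonneg
    (Filter.Eventually.of_forall hSnn) hSint (τ * (c₀ * q * m / 2))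
  have hmarkovR : (μ {ω | τ * (c₀ * q * m / 2) ≤ S ω}).toReal ≤ 2 * s₀ / (τ * c₀ * q * m) := by
    have h' : τ * (c₀ * q * m / 2) * (μ {ω | τ * (c₀ * q * m / 2) ≤ S ω}).toReal ≤ s₀ :=
      hmarkov.trans hs₀
    rw [le_div_iff₀ (by positivity)]
    nlinarith [ENNReal.toReal_nonneg (a := μ {ω | τ * (c₀ * q * m / 2) ≤ S ω})]
  -- inclusion
  have hsub : {ω | τ < S ω / (I ω + σ2)} ⊆
      {ω | q * m / 2 ≤ |W ω - q * m|} ∪ {ω | τ * (c₀ * q * m / 2) ≤ S ω} := by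
    intro ω hω
    simp only [Set.mem_setOf_eq] at hω
    have hIσ : 0 < I ω + σ2 := by have := hInn ω; linarith
    have hS : τ * (I ω + σ2) < S ω := (lt_div_iff₀ hIσ).mp hω
    by_cases hcase : W ω ≤ q * m / 2
    · left
      simp only [Set.mem_setOf_eq]
      calc q * m / 2 ≤ q * m - W ω := by linarith
        _ ≤ |q * m - W ω| := le_abs_self _
        _ = |W ω - q * m| := abs_sub_comm _ _
    · right
      simp only [Set.mem_setOf_eq]
      push_neg at hcase
      have hIlb : c₀ * W ω ≤ I ω := by rw [hWapp]; exact hIW ω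
      have : c₀ * (q * m / 2) < c₀ * W ω := by
        exact mul_lt_mul_of_pos_left hcase hc₀
      nlinarith
  -- combine
  have hmeas1 : MeasurableSet {ω | q * m / 2 ≤ |W ω - q * m|} := by
    have hWm : Measurable W := by
      have h : W = fun ω => ∑ k, δ k ω * H k ω := funext hWapp
      rw [h]; exact Finset.measurable_sum _ fun k _ => hM k
    exact measurableSet_le measurable_const ((hWm.sub measurable_const).abs)
  have hunion : μ {ω | τ < S ω / (I ω + σ2)} ≤
      μ {ω | q * m / 2 ≤ |W ω - q * m|} + μ {ω | τ * (c₀ * q * m / 2) ≤ S ω} :=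
    (measure_mono hsub).trans (measure_union_le _ _)
  have hne1 : μ {ω | q * m / 2 ≤ |W ω - q * m|} ≠ ⊤ := measure_ne_top _ _
  have hne2 : μ {ω | τ * (c₀ * q * m / 2) ≤ S ω} ≠ ⊤ := measure_ne_top _ _
  calc (μ {ω | τ < S ω / (I ω + σ2)}).toReal
      ≤ (μ {ω | q * m / 2 ≤ |W ω - q * m|} + μ {ω | τ * (c₀ * q * m / 2) ≤ S ω}).toReal :=
        ENNReal.toReal_mono (by simp [hne1, hne2, ENNReal.add_ne_top]) hunion
    _ = (μ {ω | q * m / 2 ≤ |W ω - q * m|}).toReal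
        + (μ {ω | τ * (c₀ * q * m / 2) ≤ S ω}).toReal := ENNReal.toReal_add hne1 hne2
    _ ≤ 4 * E0 / (q * m) + 2 * s₀ / (τ * c₀ * q * m) := add_le_add hchebR hmarkovR
end
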